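/- Let d ≥ 3 and let M be a (d+1)×(d+1) Hermitian complex matrix with entries b_{ij} = ⟨e_i, M e_j⟩ for 0 ≤ i,j ≤ d. Suppose: b_{0i} = 0 for 1 ≤ i ≤ d-1; b_{ij} = 0 for 1 ≤ i ≠ j ≤ d-1; b_{id} = 0 for 1 ≤ i ≤ d-1; ⟨e_0 - e_1, M e_d⟩ = 0; ⟨e_0 - e_i, M(∑_{j=0}^{d} e_j)⟩ = 0 for 1 ≤ i ≤ d-1; and ⟨e_{d-1} - e_d, M(∑_{j=0}^{d} e_j)⟩ = 0. Then M is a scalar multiple of the identity. -/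

import Mathlib

open scoped InnerProductSpace BigOperators

/-- The `i`-th standard basis vector of `ℂ^d`. -/
noncomputable def e {d : ℕ} (i : Fin d) : EuclideanSpace ℂ (Fin d) :=
  EuclideanSpace.single i 1

/-- The all-ones vector `∑_{j=0}^{d-1} e_j` of `ℂ^d`. -/
noncomputable def ones (d : ℕ) : EuclideanSpace ℂ (Fin d) :=
  ∑ j : Fin d, e j

lemma inner_e_lin {n : ℕ} (M : Matrix (Fin n) (Fin n) ℂ) (v : EuclideanSpace ℂ (Fin n)) (i : Fin n) :
    ⟪e i, Matrix.toEuclideanLin M v⟫_ℂ = ∑ j, M i j * v j := by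
  simp [e, Matrix.toEuclideanLin_apply, EuclideanSpace.inner_single_left, Matrix.mulVec,
    dotProduct]

lemma e_apply {n : ℕ} (i j : Fin n) : e i j = if j = i then 1 else 0 := by
  simp [e, EuclideanSpace.single_apply]

lemma ones_apply (n : ℕ) (j : Fin n) : ones n j = 1 := by
  show (∑ k : Fin n, e k) j = 1
  rw [WithLp.ofLp_sum, Finset.sum_apply j Finset.univ _]
  simp [e_apply]


/-- with `d = m + 3 ≥ 3`: constraints on Bob's POVM element in Lemma 2
force a Hermitian `(d+1) × (d+1)` matrix to be a scalar multiple of the identity.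
Here `b_{ij} = ⟨e_i, M e_j⟩ = M i j`. -/
theorem stmt_2 (m : ℕ) (M : Matrix (Fin (m + 4)) (Fin (m + 4)) ℂ)
    (hM : M.IsHermitian)
    -- b_{0i} = 0 for 1 ≤ i ≤ d-1
    (h1 : ∀ i : ℕ, ∀ _hi1 : 1 ≤ i, ∀ _hi2 : i ≤ m + 2,
      M ⟨0, by omega⟩ ⟨i, by omega⟩ = 0)
    -- b_{ij} = 0 for 1 ≤ i ≠ j ≤ d-1
    (h2 : ∀ i j : ℕ, ∀ _hi1 : 1 ≤ i, ∀ _hi2 : i ≤ m + 2, ∀ _hj1 : 1 ≤ j,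
      ∀ _hj2 : j ≤ m + 2, ∀ _hij : i ≠ j, M ⟨i, by omega⟩ ⟨j, by omega⟩ = 0)
    -- b_{id} = 0 for 1 ≤ i ≤ d-1
    (h3 : ∀ i : ℕ, ∀ _hi1 : 1 ≤ i, ∀ _hi2 : i ≤ m + 2,
      M ⟨i, by omega⟩ ⟨m + 3, by omega⟩ = 0)
    -- ⟨e_0 - e_1, M e_d⟩ = 0
    (h4 : ⟪e (0 : Fin (m + 4)) - e 1,
      Matrix.toEuclideanLin M (e ⟨m + 3, by omega⟩)⟫_ℂ = 0)
    -- ⟨e_0 - e_i, M (∑_{j=0}^{d} e_j)⟩ = 0 for 1 ≤ i ≤ d-1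
    (h5 : ∀ i : ℕ, ∀ _hi1 : 1 ≤ i, ∀ _hi2 : i ≤ m + 2,
      ⟪e (0 : Fin (m + 4)) - e ⟨i, by omega⟩,
        Matrix.toEuclideanLin M (ones (m + 4))⟫_ℂ = 0)
    -- ⟨e_{d-1} - e_d, M (∑_{j=0}^{d} e_j)⟩ = 0
    (h6 : ⟪e (⟨m + 2, by omega⟩ : Fin (m + 4)) - e ⟨m + 3, by omega⟩,
      Matrix.toEuclideanLin M (ones (m + 4))⟫_ℂ = 0) :
    ∃ c : ℂ, M = c • (1 : Matrix (Fin (m + 4)) (Fin (m + 4)) ℂ) := by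
  have hsym : ∀ i j : Fin (m + 4), M i j = star (M j i) := by
    intro i j
    have := hM.apply j i
    simpa using congrArg star this
  have hone : (1 : Fin (m + 4)) = ⟨1, by omega⟩ := Fin.ext (by simp)
  have hzero : (0 : Fin (m + 4)) = ⟨0, by omega⟩ := Fin.ext (by simp)
  -- M 0 d = 0 from h4
  have h0d : M ⟨0, by omega⟩ ⟨m + 3, by omega⟩ = 0 := by
    rw [inner_sub_left, inner_e_lin, inner_e_lin] at h4
    simp only [e_apply, mul_ite, mul_one, mul_zero, Finset.sum_ite_eq',
      Finset.mem_univ, if_true] at h4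
    rw [hone, hzero, h3 1 (by omega) (by omega), sub_zero] at h4
    exact h4
  -- all off-diagonal entries vanish
  have hlt : ∀ a b : ℕ, ∀ ha : a < m + 4, ∀ hb : b < m + 4, a < b →
      M ⟨a, ha⟩ ⟨b, hb⟩ = 0 := by
    intro a b ha hb hab
    by_cases ha0 : a = 0
    · subst ha0
      by_cases hbd : b = m + 3
      · subst hbd; exact h0d
      · exact h1 b (by omega) (by omega)
    · by_cases hbd : b = m + 3
      · subst hbd; exact h3 a (by omega) (by omega)
      · exact h2 a b (by omega) (by omega) (by omega) (by omega) (by omega)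
  have hoff : ∀ i j : Fin (m + 4), i ≠ j → M i j = 0 := by
    intro i j hne
    rcases lt_trichotomy i.val j.val with h | h | h
    · have := hlt i.val j.val i.isLt j.isLt h
      simpa using this
    · exact absurd (Fin.ext h) hne
    · rw [hsym i j]
      have := hlt j.val i.val j.isLt i.isLt h
      simp only [Fin.eta] at this
      rw [this]; simp
  -- row sums equal diagonal
  have hrow : ∀ i : Fin (m + 4), ∑ j, M i j = M i i := by
    intro i
    refine Finset.sum_eq_single i (fun b _ hb => hoff i b (Ne.symm hb)) (by simp)
  -- diagonal equalities
  have hdiag5 : ∀ a : ℕ, ∀ h1a : 1 ≤ a, ∀ h2a : a ≤ m + 2, ∀ ha : a < m + 4,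
      M ⟨a, ha⟩ ⟨a, ha⟩ = M 0 0 := by
    intro a h1a h2a ha
    have := h5 a h1a h2a
    rw [inner_sub_left, inner_e_lin, inner_e_lin] at this
    simp only [ones_apply, mul_one, hrow] at this
    have := sub_eq_zero.mp this
    simpa using this.symm
  have hdiagd : M (⟨m + 3, by omega⟩ : Fin (m + 4)) ⟨m + 3, by omega⟩ = M 0 0 := by
    rw [inner_sub_left, inner_e_lin, inner_e_lin] at h6
    simp only [ones_apply, mul_one, hrow] at h6
    have h6' := sub_eq_zero.mp h6
    rw [← h6']
    exact hdiag5 (m + 2) (by omega) (by omega) (by omega)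
  have hdiag : ∀ i : Fin (m + 4), M i i = M 0 0 := by
    intro i
    by_cases hi0 : i.val = 0
    · have : i = 0 := Fin.ext (by simp [hi0])
      rw [this]
    · by_cases hid : i.val = m + 3
      · have : i = ⟨m + 3, by omega⟩ := Fin.ext hid
        rw [this]; exact hdiagd
      · have := hdiag5 i.val (by omega) (by omega) i.isLt
        simpa using this
  refine ⟨M 0 0, ?_⟩
  ext i j
  by_cases hij : i = j
  · subst hij
    simp [Matrix.one_apply, hdiag i]
  · simp [Matrix.one_apply, hij, hoff i j hij]
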